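/- Fix m ≥ 2 and n ≥ 0, and let r_m = m mod 2. The average of the longest-increasing-subsequence length over the simple m-nary butterfly group satisfies (1/m^n) · Σ_{σ ∈ B_{s,n}^{(m)}} L(σ) = ((3m² + r_m)/(4m))^n. -/

import Mathlib

/-- Kronecker product of permutations: `(i, r) ↦ (σ i, π r)` under the
row-major identification `Fin (a * b) ≃ Fin a × Fin b`. -/
def permKron {a b : ℕ} (σ : Equiv.Perm (Fin a)) (π : Equiv.Perm (Fin b)) :
    Equiv.Perm (Fin (a * b)) :=
  finProdFinEquiv.symm.trans ((Equiv.prodCongr σ π).trans finProdFinEquiv)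

/-- Direct (block) sum of permutations: `(i, r) ↦ (i, π i r)`. -/
def permBlockSum {a b : ℕ} (π : Fin a → Equiv.Perm (Fin b)) :
    Equiv.Perm (Fin (a * b)) :=
  finProdFinEquiv.symm.trans ((Equiv.prodCongrRight π).trans finProdFinEquiv)

/-- The simple `m`-nary butterfly permutations of `Fin (m ^ n)`:
Kronecker products `τ^{a₁} ⊗ ⋯ ⊗ τ^{aₙ}` of powers of the standard `m`-cycle `τ = finRotate m`. -/
def simpleButterfly (m : ℕ) : (n : ℕ) → Set (Equiv.Perm (Fin (m ^ n)))
  | 0 => {1}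
  | n + 1 =>
    {σ | ∃ (a : ℤ) (π : Equiv.Perm (Fin (m ^ n))), π ∈ simpleButterfly m n ∧
      σ = (finCongr (pow_succ' m n).symm).permCongr (permKron (finRotate m ^ a) π)}

/-- The nonsimple `m`-nary butterfly permutations of `Fin (m ^ n)`:
`B₀ = {1}`, `B_{n+1} = {(τ^a ⊗ id) ∘ (σ₁ ⊕ ⋯ ⊕ σ_m) : σᵢ ∈ B_n}`. -/
def nonsimpleButterfly (m : ℕ) : (n : ℕ) → Set (Equiv.Perm (Fin (m ^ n)))
  | 0 => {1}
  | n + 1 =>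
    {σ | ∃ (a : ℤ) (π : Fin m → Equiv.Perm (Fin (m ^ n))),
      (∀ i, π i ∈ nonsimpleButterfly m n) ∧
      σ = (finCongr (pow_succ' m n).symm).permCongr
        (permKron (finRotate m ^ a) 1 * permBlockSum π)}

/-- The length of the longest increasing subsequence of a permutation. -/
noncomputable def LIS {M : ℕ} (σ : Equiv.Perm (Fin M)) : ℕ :=
  sSup {k | ∃ t : Finset (Fin M), t.card = k ∧ StrictMonoOn (⇑σ) ↑t}

/-- The length of the longest decreasing subsequence of a permutation. -/
noncomputable def LDS {M : ℕ} (σ : Equiv.Perm (Fin M)) : ℕ :=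
  sSup {k | ∃ t : Finset (Fin M), t.card = k ∧ StrictAntiOn (⇑σ) ↑t}

/-- The number of cycles in the disjoint cycle decomposition of `σ`,
counting fixed points as cycles of length 1. -/
def numCycles {M : ℕ} (σ : Equiv.Perm (Fin M)) : ℕ :=
  Multiset.card σ.cycleType + (Finset.univ.filter fun x => σ x = x).card

/-- The number of fixed points of `σ`. -/
def numFixed {M : ℕ} (σ : Equiv.Perm (Fin M)) : ℕ :=
  (Finset.univ.filter fun x => σ x = x).card

lemma sum_max_eq (m : ℕ) : 4 * ∑ b ∈ Finset.range m, max b (m - b) = 3 * m^2 + m % 2 := by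
  induction m using Nat.twoStepInduction with
  | zero => simp
  | one => simp
  | more m ih1 ih2 =>
    clear ih2
    have hc : ∀ c ∈ Finset.range (m+1), max (c+1) (m+2-(c+1)) = max c (m-c) + 1 := by
      intro c hc
      rw [Finset.mem_range] at hc
      rw [show m+2-(c+1) = (m-c)+1 by omega, Nat.succ_max_succ]
    rw [Finset.sum_range_succ' (fun b => max b (m+2-b)) (m+1), Finset.sum_congr rfl hc,
      Finset.sum_add_distrib, Finset.sum_const, Finset.sum_range_succ]
    have hmod : (m+2) % 2 = m % 2 := by omega
    rw [hmod, show (m+2)^2 = m^2 + 4*m + 4 by ring]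
    simp only [Nat.sub_self, Nat.max_zero, Nat.sub_zero, Nat.zero_max, Finset.card_range,
      smul_eq_mul, mul_one]
    generalize m^2 = M2 at ih1 ⊢
    omega

lemma LIS_permCongr_finCongr {M N : ℕ} (h : M = N) (σ : Equiv.Perm (Fin M)) :
    LIS ((finCongr h).permCongr σ) = LIS σ := by
  subst h
  have : (finCongr rfl).permCongr σ = σ := Equiv.ext fun x => by simp
  rw [this]

section LISlem

variable {M : ℕ} (σ : Equiv.Perm (Fin M))

lemma LIS_set_nonempty : {k | ∃ t : Finset (Fin M), t.card = k ∧ StrictMonoOn (⇑σ) ↑t}.Nonempty :=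
  ⟨0, ∅, Finset.card_empty, by simp [StrictMonoOn]⟩

lemma LIS_set_bdd : BddAbove {k | ∃ t : Finset (Fin M), t.card = k ∧ StrictMonoOn (⇑σ) ↑t} := by
  refine ⟨M, ?_⟩
  rintro k ⟨t, rfl, -⟩
  simpa using Finset.card_le_univ t

lemma card_le_LIS {t : Finset (Fin M)} (h : StrictMonoOn (⇑σ) ↑t) : t.card ≤ LIS σ :=
  le_csSup (LIS_set_bdd σ) ⟨t, rfl, h⟩

lemma LIS_le {v : ℕ} (h : ∀ t : Finset (Fin M), StrictMonoOn (⇑σ) ↑t → t.card ≤ v) :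
    LIS σ ≤ v := by
  refine csSup_le (LIS_set_nonempty σ) ?_
  rintro k ⟨t, rfl, ht⟩
  exact h t ht

lemma exists_LIS : ∃ t : Finset (Fin M), t.card = LIS σ ∧ StrictMonoOn (⇑σ) ↑t :=
  Nat.sSup_mem (LIS_set_nonempty σ) (LIS_set_bdd σ)

lemma LIS_one : LIS (1 : Equiv.Perm (Fin M)) = M := by
  apply le_antisymm
  · exact LIS_le _ fun t _ => by simpa using Finset.card_le_univ t
  · have : StrictMonoOn (⇑(1 : Equiv.Perm (Fin M))) ↑(Finset.univ : Finset (Fin M)) := by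
      simpa using strictMono_id.strictMonoOn (Set.univ)
    simpa using card_le_LIS _ this

end LISlem

lemma kron_lt_iff {a b : ℕ} (p q : Fin a × Fin b) :
    finProdFinEquiv p < finProdFinEquiv q ↔ p.1 < q.1 ∨ (p.1 = q.1 ∧ p.2 < q.2) := by
  rw [Fin.lt_def, finProdFinEquiv_apply_val, finProdFinEquiv_apply_val]
  have hp2 : (p.2 : ℕ) < b := p.2.isLt
  have hq2 : (q.2 : ℕ) < b := q.2.isLt
  constructor
  · intro h
    rcases lt_trichotomy p.1 q.1 with h1 | h1 | h1
    · exact Or.inl h1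
    · refine Or.inr ⟨h1, ?_⟩
      rw [Fin.lt_def]
      have hv : (p.1 : ℕ) = q.1 := congrArg Fin.val h1
      have hbb : b * (p.1 : ℕ) = b * (q.1 : ℕ) := by rw [hv]
      omega
    · exfalso
      have key : b * (q.1 : ℕ) + b ≤ b * p.1 := by
        calc b * (q.1 : ℕ) + b = b * ((q.1 : ℕ) + 1) := by ring
        _ ≤ b * p.1 := Nat.mul_le_mul (le_refl b) h1
      omega
  · rintro (h | ⟨h, h2⟩)
    · have key : b * (p.1 : ℕ) + b ≤ b * q.1 := by
        calc b * (p.1 : ℕ) + b = b * ((p.1 : ℕ) + 1) := by ring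
        _ ≤ b * q.1 := Nat.mul_le_mul (le_refl b) h
      omega
    · have hv : (p.1 : ℕ) = q.1 := congrArg Fin.val h
      have hbb : b * (p.1 : ℕ) = b * (q.1 : ℕ) := by rw [hv]
      rw [Fin.lt_def] at h2
      omega

lemma permKron_apply {a b : ℕ} (σ : Equiv.Perm (Fin a)) (π : Equiv.Perm (Fin b))
    (p : Fin a × Fin b) :
    permKron σ π (finProdFinEquiv p) = finProdFinEquiv (σ p.1, π p.2) := by
  simp [permKron, Prod.map]

theorem LIS_permKron {a b : ℕ} (σ : Equiv.Perm (Fin a)) (π : Equiv.Perm (Fin b)) :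
    LIS (permKron σ π) = LIS σ * LIS π := by
  classical
  apply le_antisymm
  · apply LIS_le
    intro t ht
    set e := (finProdFinEquiv : Fin a × Fin b ≃ Fin (a * b)) with he
    set t' : Finset (Fin a × Fin b) := t.image e.symm with ht'
    have hmem : ∀ p ∈ t', e p ∈ t := by
      intro p hp
      rw [ht', Finset.mem_image] at hp
      obtain ⟨x, hx, rfl⟩ := hp
      simpa using hx
    have key : ∀ p ∈ t', ∀ q ∈ t', (p.1 < q.1 ∨ (p.1 = q.1 ∧ p.2 < q.2)) →
        (σ p.1 < σ q.1 ∨ (σ p.1 = σ q.1 ∧ π p.2 < π q.2)) := by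
      intro p hp q hq hlt
      have h1 : e p < e q := (kron_lt_iff p q).mpr hlt
      have h2 := ht (hmem p hp) (hmem q hq) h1
      rw [show (permKron σ π) (e p) = e (σ p.1, π p.2) from permKron_apply σ π p,
        show (permKron σ π) (e q) = e (σ q.1, π q.2) from permKron_apply σ π q] at h2
      exact (kron_lt_iff (σ p.1, π p.2) (σ q.1, π q.2)).mp h2
    have hcard : t'.card = t.card := Finset.card_image_of_injective _ e.symm.injective
    set s : Finset (Fin a) := t'.image Prod.fst with hs
    have hfib : t'.card = ∑ i ∈ s, (t'.filter (fun p => p.1 = i)).card :=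
      Finset.card_eq_sum_card_fiberwise (fun p hp => Finset.mem_image_of_mem _ hp)
    have hmono_s : StrictMonoOn (⇑σ) ↑s := by
      intro i hi i' hi' hlt
      rw [hs, Finset.coe_image, Set.mem_image] at hi hi'
      obtain ⟨p, hp, rfl⟩ := hi
      obtain ⟨q, hq, rfl⟩ := hi'
      rcases key p (Finset.mem_coe.mp hp) q (Finset.mem_coe.mp hq) (Or.inl hlt) with h | ⟨h, -⟩
      · exact h
      · exact absurd (σ.injective h) (ne_of_lt hlt)
    have hfibcard : ∀ i ∈ s, (t'.filter (fun p => p.1 = i)).card ≤ LIS π := by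
      intro i hi
      set u : Finset (Fin b) := (t'.filter (fun p => p.1 = i)).image Prod.snd with hu
      have hinj : Set.InjOn Prod.snd ((t'.filter (fun p => p.1 = i) : Finset (Fin a × Fin b)) : Set (Fin a × Fin b)) := by
        intro p hp q hq hpq
        simp only [Finset.coe_filter, Set.mem_setOf_eq] at hp hq
        exact Prod.ext (hp.2.trans hq.2.symm) hpq
      have hucard : u.card = (t'.filter (fun p => p.1 = i)).card :=
        Finset.card_image_of_injOn hinj
      have humono : StrictMonoOn (⇑π) ↑u := by
        intro r hr r' hr' hlt
        rw [hu, Finset.coe_image, Set.mem_image] at hr hr'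
        obtain ⟨p, hp, rfl⟩ := hr
        obtain ⟨q, hq, rfl⟩ := hr'
        rw [Finset.mem_coe, Finset.mem_filter] at hp hq
        rcases key p hp.1 q hq.1 (Or.inr ⟨hp.2.trans hq.2.symm, hlt⟩) with h | ⟨-, h⟩
        · exact absurd (congrArg Fin.val (hp.2.trans hq.2.symm))
            (by exact fun hh => absurd (Fin.ext hh : p.1 = q.1) (fun he2 => (ne_of_lt h) (congrArg σ he2)))
        · exact h
      calc (t'.filter (fun p => p.1 = i)).card = u.card := hucard.symm
      _ ≤ LIS π := card_le_LIS π humono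
    calc t.card = t'.card := hcard.symm
    _ = ∑ i ∈ s, (t'.filter (fun p => p.1 = i)).card := hfib
    _ ≤ ∑ i ∈ s, LIS π := Finset.sum_le_sum hfibcard
    _ = s.card * LIS π := by rw [Finset.sum_const, smul_eq_mul]
    _ ≤ LIS σ * LIS π := Nat.mul_le_mul_right _ (card_le_LIS σ hmono_s)
  · obtain ⟨t₁, h1c, h1m⟩ := exists_LIS σ
    obtain ⟨t₂, h2c, h2m⟩ := exists_LIS π
    set e := (finProdFinEquiv : Fin a × Fin b ≃ Fin (a * b)) with he
    set t : Finset (Fin (a * b)) := (t₁ ×ˢ t₂).image e with htdef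
    have hmono : StrictMonoOn (⇑(permKron σ π)) ↑t := by
      intro x hx y hy hxy
      rw [htdef, Finset.coe_image, Set.mem_image] at hx hy
      obtain ⟨p, hp, rfl⟩ := hx
      obtain ⟨q, hq, rfl⟩ := hy
      rw [Finset.mem_coe, Finset.mem_product] at hp hq
      rw [permKron_apply, permKron_apply]
      rw [kron_lt_iff] at hxy ⊢
      rcases hxy with h | ⟨h, h2⟩
      · exact Or.inl (h1m (Finset.mem_coe.mpr hp.1) (Finset.mem_coe.mpr hq.1) h)
      · exact Or.inr ⟨congrArg σ h, h2m (Finset.mem_coe.mpr hp.2) (Finset.mem_coe.mpr hq.2) h2⟩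
    have hcard : t.card = LIS σ * LIS π := by
      rw [htdef, Finset.card_image_of_injective _ e.injective, Finset.card_product, h1c, h2c]
    calc LIS σ * LIS π = t.card := hcard.symm
    _ ≤ LIS (permKron σ π) := card_le_LIS _ hmono

open Fin.NatCast in
lemma finRotate_pow_apply {M : ℕ} (k : ℕ) (i : Fin (M+1)) :
    (finRotate (M+1) ^ k) i = i + (k : Fin (M+1)) := by
  induction k with
  | zero => simp
  | succ k ih =>
    rw [pow_succ', Equiv.Perm.mul_apply, ih, finRotate_succ_apply]
    push_cast
    rw [add_assoc]

lemma finRotate_pow_self {M : ℕ} : finRotate (M+1) ^ (M+1) = 1 := by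
  ext i
  rw [finRotate_pow_apply]
  simp [Fin.natCast_self]

lemma finRotate_zpow_reduce {M : ℕ} (a : ℤ) :
    finRotate (M+1) ^ a = finRotate (M+1) ^ ((a % ((M+1 : ℕ) : ℤ)).toNat) := by
  have h0 : (0:ℤ) ≤ a % ((M+1 : ℕ) : ℤ) := Int.emod_nonneg a (by positivity)
  have h1 : finRotate (M+1) ^ (((M+1 : ℕ) : ℤ)) = 1 := by
    rw [zpow_natCast]
    exact finRotate_pow_self
  have key : a = ((M+1 : ℕ) : ℤ) * (a / ((M+1 : ℕ) : ℤ)) + ((a % ((M+1 : ℕ) : ℤ)).toNat : ℤ) := by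
    rw [Int.toNat_of_nonneg h0]
    exact (Int.mul_ediv_add_emod a _).symm
  conv_lhs => rw [key]
  rw [zpow_add, zpow_mul, h1, one_zpow, one_mul, zpow_natCast]

lemma LIS_finRotate_pow {m : ℕ} (hm : 1 ≤ m) {b : ℕ} (hb : b < m) :
    LIS (finRotate m ^ b) = max b (m - b) := by
  obtain ⟨M, rfl⟩ := Nat.exists_eq_add_of_le hm
  rw [show 1 + M = M + 1 by omega] at *
  have happly : ∀ i : Fin (M+1), (((finRotate (M+1) ^ b) i : Fin (M+1)) : ℕ)
      = ((i : ℕ) + b) % (M+1) := by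
    intro i
    rw [finRotate_pow_apply, Fin.add_def, Fin.val_cast_of_lt hb]
  rcases Nat.eq_zero_or_pos b with rfl | hb1
  · rw [pow_zero, LIS_one]
    simp
  -- 1 ≤ b < M+1
  set c : Fin (M+1) := ⟨M+1-b, by omega⟩ with hc
  apply le_antisymm
  · apply LIS_le
    intro t ht
    have hsplit : t ⊆ Finset.Iio c ∨ t ⊆ Finset.Ici c := by
      by_contra hcon
      push_neg at hcon
      obtain ⟨h1, h2⟩ := hcon
      rw [Finset.not_subset] at h1 h2
      obtain ⟨i, hi, hi2⟩ := h1
      obtain ⟨j, hj, hj2⟩ := h2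
      rw [Finset.mem_Iio, not_lt] at hi2
      rw [Finset.mem_Ici, not_le] at hj2
      -- hi2 : c ≤ i, hj2 : j < c
      have hji : j < i := lt_of_lt_of_le hj2 hi2
      have := ht hj hi hji
      rw [Fin.lt_def] at this
      rw [happly, happly] at this
      have hiv : (i:ℕ) < M+1 := i.isLt
      have hjv : (j:ℕ) < M+1 := j.isLt
      have hcv : (c:ℕ) = M+1-b := rfl
      have hile : M+1-b ≤ (i:ℕ) := hi2
      have hjlt : (j:ℕ) < M+1-b := hj2
      have e1 : ((j:ℕ) + b) % (M+1) = (j:ℕ) + b := Nat.mod_eq_of_lt (by omega)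
      have e2 : ((i:ℕ) + b) % (M+1) = (i:ℕ) + b - (M+1) := by
        rw [Nat.mod_eq_sub_mod (by omega), Nat.mod_eq_of_lt (by omega)]
      omega
    rcases hsplit with h | h
    · calc t.card ≤ (Finset.Iio c).card := Finset.card_le_card h
      _ = M+1-b := Fin.card_Iio c
      _ ≤ max b (M+1-b) := le_max_right _ _
    · calc t.card ≤ (Finset.Ici c).card := Finset.card_le_card h
      _ = b := by
        rw [Fin.card_Ici, show ((c : Fin (M+1)) : ℕ) = M+1-b from rfl]
        omega
      _ ≤ max b (M+1-b) := le_max_left _ _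
  · have hlo : M+1-b ≤ LIS (finRotate (M+1) ^ b) := by
      have hmono : StrictMonoOn (⇑(finRotate (M+1) ^ b)) ↑(Finset.Iio c) := by
        intro x hx y hy hxy
        rw [Finset.coe_Iio, Set.mem_Iio] at hx hy
        rw [Fin.lt_def] at hxy ⊢
        rw [happly, happly]
        have hxv : (x:ℕ) < M+1-b := hx
        have hyv : (y:ℕ) < M+1-b := hy
        rw [Nat.mod_eq_of_lt (by omega), Nat.mod_eq_of_lt (by omega)]
        omega
      have := card_le_LIS _ hmono
      rwa [Fin.card_Iio] at this
    have hhi : b ≤ LIS (finRotate (M+1) ^ b) := by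
      have hmono : StrictMonoOn (⇑(finRotate (M+1) ^ b)) ↑(Finset.Ici c) := by
        intro x hx y hy hxy
        rw [Finset.coe_Ici, Set.mem_Ici] at hx hy
        rw [Fin.lt_def] at hxy ⊢
        rw [happly, happly]
        have hxv : M+1-b ≤ (x:ℕ) := hx
        have hyv : M+1-b ≤ (y:ℕ) := hy
        have hxv2 : (x:ℕ) < M+1 := x.isLt
        have hyv2 : (y:ℕ) < M+1 := y.isLt
        have e1 : ((x:ℕ) + b) % (M+1) = (x:ℕ) + b - (M+1) := by
          rw [Nat.mod_eq_sub_mod (by omega), Nat.mod_eq_of_lt (by omega)]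
        have e2 : ((y:ℕ) + b) % (M+1) = (y:ℕ) + b - (M+1) := by
          rw [Nat.mod_eq_sub_mod (by omega), Nat.mod_eq_of_lt (by omega)]
        omega
      have := card_le_LIS _ hmono
      rw [Fin.card_Ici, show ((c : Fin (M+1)) : ℕ) = M+1-b from rfl] at this
      omega
    exact max_le hhi hlo

def SB (m : ℕ) : (n : ℕ) → Finset (Equiv.Perm (Fin (m ^ n)))
  | 0 => {1}
  | n + 1 => (Finset.range m ×ˢ SB m n).image
      fun p => (finCongr (pow_succ' m n).symm).permCongr
        (permKron (finRotate m ^ (p.1 : ℤ)) p.2)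

lemma coe_SB (m : ℕ) (hm : 2 ≤ m) :
    ∀ n, (SB m n : Set (Equiv.Perm (Fin (m ^ n)))) = simpleButterfly m n := by
  intro n
  induction n with
  | zero =>
    simp [SB, simpleButterfly]
    exact Finset.coe_singleton _
  | succ n ih =>
    ext σ
    simp only [SB, simpleButterfly, Finset.coe_image, Set.mem_image, Finset.mem_coe,
      Finset.mem_product, Finset.mem_range, Set.mem_setOf_eq]
    constructor
    · rintro ⟨⟨b, π⟩, ⟨hb, hπ⟩, rfl⟩
      refine ⟨(b : ℤ), π, ?_, rfl⟩
      rw [← ih]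
      exact Finset.mem_coe.mpr hπ
    · rintro ⟨a, π, hπ, rfl⟩
      obtain ⟨M, hM⟩ : ∃ M, m = M + 1 := ⟨m - 1, by omega⟩
      have hmpos : (0:ℤ) < (m:ℤ) := by exact_mod_cast (by omega : 0 < m)
      have hpow : finRotate m ^ ((((a % (m:ℤ)).toNat) : ℕ) : ℤ) = finRotate m ^ a := by
        subst hM
        rw [zpow_natCast, finRotate_zpow_reduce a]
      refine ⟨((a % (m : ℤ)).toNat, π), ⟨?_, ?_⟩, ?_⟩
      · have h1 : a % (m:ℤ) < m := Int.emod_lt_of_pos a hmpos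
        have h2 : (0:ℤ) ≤ a % (m:ℤ) := Int.emod_nonneg a hmpos.ne'
        omega
      · rw [← Finset.mem_coe, ih]; exact hπ
      · rw [hpow]

lemma param_injOn (m n : ℕ) (hm : 2 ≤ m) :
    Set.InjOn (fun p : ℕ × Equiv.Perm (Fin (m ^ n)) =>
        (finCongr (pow_succ' m n).symm).permCongr
          (permKron (finRotate m ^ (p.1 : ℤ)) p.2))
      ↑(Finset.range m ×ˢ SB m n) := by
  intro p hp q hq heq
  simp only [Finset.coe_product, Set.mem_prod, Finset.mem_coe, Finset.mem_range] at hp hq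
  have h1 : permKron (finRotate m ^ (p.1 : ℤ)) p.2 = permKron (finRotate m ^ (q.1 : ℤ)) q.2 :=
    (Equiv.permCongr (finCongr (pow_succ' m n).symm)).injective heq
  have hkey : ∀ (x : Fin m) (y : Fin (m ^ n)),
      ((finRotate m ^ (p.1 : ℤ)) x, p.2 y) = ((finRotate m ^ (q.1 : ℤ)) x, q.2 y) := by
    intro x y
    have := congrArg (fun f : Equiv.Perm (Fin (m * m ^ n)) => f (finProdFinEquiv (x, y))) h1
    simp only [permKron_apply] at this
    exact finProdFinEquiv.injective this
  obtain ⟨M, hM⟩ : ∃ M, m = M + 1 := ⟨m - 1, by omega⟩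
  have hpn : 0 < m ^ n := Nat.pow_pos (by omega)
  have hπ : p.2 = q.2 := by
    ext y
    exact congrArg Fin.val (congrArg Prod.snd (hkey ⟨0, by omega⟩ y))
  have hrot : (finRotate m ^ (p.1 : ℤ)) = (finRotate m ^ (q.1 : ℤ)) := by
    ext x
    exact congrArg Fin.val (congrArg Prod.fst (hkey x ⟨0, hpn⟩))
  have hb : p.1 = q.1 := by
    subst hM
    have := congrArg (fun f : Equiv.Perm (Fin (M+1)) => f 0) hrot
    simp only [zpow_natCast, finRotate_pow_apply, zero_add] at this
    have hv := congrArg Fin.val this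
    rwa [Fin.val_cast_of_lt hp.1, Fin.val_cast_of_lt hq.1] at hv
  exact Prod.ext hb hπ

lemma sum_SB (m : ℕ) (hm : 2 ≤ m) (n : ℕ) :
    ∑ σ ∈ SB m n, (LIS σ : ℝ) = (((∑ b ∈ Finset.range m, max b (m - b) : ℕ) : ℝ)) ^ n := by
  induction n with
  | zero =>
    calc ∑ σ ∈ SB m 0, (LIS σ : ℝ)
        = ∑ σ ∈ ({1} : Finset (Equiv.Perm (Fin (m ^ 0)))), (LIS σ : ℝ) := rfl
      _ = 1 := by rw [Finset.sum_singleton, LIS_one]; norm_num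
      _ = _ := by rw [pow_zero]
  | succ n ih =>
    rw [show SB m (n+1) = (Finset.range m ×ˢ SB m n).image
      (fun p => (finCongr (pow_succ' m n).symm).permCongr
        (permKron (finRotate m ^ (p.1 : ℤ)) p.2)) from rfl]
    rw [Finset.sum_image (fun p hp q hq h => param_injOn m n hm (Finset.mem_coe.mpr hp)
      (Finset.mem_coe.mpr hq) h)]
    rw [Finset.sum_product]
    have hterm : ∀ b ∈ Finset.range m, ∀ π ∈ SB m n,
        (LIS ((finCongr (pow_succ' m n).symm).permCongr
          (permKron (finRotate m ^ (b : ℤ)) π)) : ℝ)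
        = ((max b (m - b) : ℕ) : ℝ) * (LIS π : ℝ) := by
      intro b hb π hπ
      rw [Finset.mem_range] at hb
      rw [LIS_permCongr_finCongr, LIS_permKron, zpow_natCast, LIS_finRotate_pow (by omega) hb]
      push_cast
      ring
    calc ∑ b ∈ Finset.range m, ∑ π ∈ SB m n,
        (LIS ((finCongr (pow_succ' m n).symm).permCongr
          (permKron (finRotate m ^ ((b:ℕ) : ℤ)) π)) : ℝ)
        = ∑ b ∈ Finset.range m, ∑ π ∈ SB m n, ((max b (m - b) : ℕ) : ℝ) * (LIS π : ℝ) := by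
          refine Finset.sum_congr rfl fun b hb => Finset.sum_congr rfl fun π hπ => ?_
          exact hterm b hb π hπ
      _ = (∑ b ∈ Finset.range m, ((max b (m - b) : ℕ) : ℝ)) * (∑ π ∈ SB m n, (LIS π : ℝ)) := by
          rw [Finset.sum_mul]
          exact Finset.sum_congr rfl fun b _ => by rw [Finset.mul_sum]
      _ = (((∑ b ∈ Finset.range m, max b (m - b) : ℕ) : ℝ)) ^ (n+1) := by
          rw [ih, ← Nat.cast_sum, ← pow_succ']


/-- The average LIS over the simple `m`-nary butterfly group `B_{s,n}^{(m)}`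
(of order `mⁿ`) equals `((3m² + (m mod 2))/(4m))ⁿ`. -/
theorem simpleButterfly_expected_LIS (m n : ℕ) (hm : 2 ≤ m) :
    (1 / (m : ℝ) ^ n) * ∑ᶠ σ ∈ simpleButterfly m n, (LIS σ : ℝ) =
      ((3 * (m : ℝ) ^ 2 + ((m % 2 : ℕ) : ℝ)) / (4 * (m : ℝ))) ^ n := by
  have hm0 : (m : ℝ) ≠ 0 := Nat.cast_ne_zero.mpr (by omega)
  rw [← coe_SB m hm n, finsum_mem_coe_finset, sum_SB m hm n]
  have h4 : ((∑ b ∈ Finset.range m, max b (m - b) : ℕ) : ℝ)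
      = (3 * (m : ℝ) ^ 2 + ((m % 2 : ℕ) : ℝ)) / 4 := by
    have h := congrArg (fun k : ℕ => (k : ℝ)) (sum_max_eq m)
    push_cast at h
    push_cast
    linarith
  rw [h4, div_pow, div_pow, mul_pow]
  field_simp
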